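/- Let L be a self-similar abelian group, i.e., there exists a finite-index subgroup M ≤ L and a homomorphism φ : M → L with no nontrivial φ-invariant subgroup of M. Let L^ω = ⊕_{i≥1} L be a countable direct sum of copies of L. Then the wreath product L^ω wr C_2 is self-similar: it admits a finite-index subgroup H and a homomorphism f : H → L^ω wr C_2 such that no nontrivial subgroup of H normal in L^ω wr C_2 is f-invariant. -/

import Mathlib

def shiftEquiv {B X : Type*} [AddCommGroup B] [AddCommGroup X] (x : X) :
    (X →₀ B) ≃+ (X →₀ B) := Finsupp.domCongr (Equiv.addRight x)

noncomputable def shiftHom (B X : Type*) [AddCommGroup B] [AddCommGroup X] :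
    Multiplicative X →* Multiplicative (AddAut (X →₀ B)) :=
  MonoidHom.mk' (fun x => Multiplicative.ofAdd (shiftEquiv x.toAdd)) (by
    intro a b
    show shiftEquiv _ = shiftEquiv _ + shiftEquiv _
    apply AddEquiv.ext
    intro f
    ext y
    simp [shiftEquiv, Finsupp.domCongr, Equiv.Perm.mul_def, sub_eq_add_neg]
    congr 1
    abel)

noncomputable def wreathAct (B X : Type*) [AddCommGroup B] [AddCommGroup X] :
    Multiplicative X →* MulAut (Multiplicative (X →₀ B)) :=
  { toFun := fun x => AddEquiv.toMultiplicative (Multiplicative.toAdd (shiftHom B X x))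
    map_one' := by ext f; simp
    map_mul' := by intro a b; ext f; simp }

abbrev Wreath (B X : Type*) [AddCommGroup B] [AddCommGroup X] :=
  SemidirectProduct (Multiplicative (X →₀ B)) (Multiplicative X) (wreathAct B X)

section aux
variable {L : Type*} [AddCommGroup L]

/-- evaluation of the wreath base at (0,0) -/
noncomputable def evalW : (ZMod 2 →₀ (ℕ →₀ L)) →+ L :=
  (Finsupp.applyAddHom (0 : ℕ)).comp (Finsupp.applyAddHom (0 : ZMod 2))

@[simp] lemma evalW_apply (w : ZMod 2 →₀ (ℕ →₀ L)) : evalW w = w 0 0 := rfl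

/-- shift-down map on ℕ →₀ L -/
noncomputable def Tmap : (ℕ →₀ L) →+ (ℕ →₀ L) := Finsupp.comapDomain.addMonoidHom Nat.succ_injective

@[simp] lemma Tmap_apply (β : ℕ →₀ L) (i : ℕ) : Tmap β i = β (i + 1) := rfl

/-- swap coordinates 0 and 1 -/
noncomputable def smap : (ℕ →₀ L) →+ (ℕ →₀ L) := (Finsupp.domCongr (Equiv.swap 0 1)).toAddMonoidHom

@[simp] lemma smap_apply (β : ℕ →₀ L) (i : ℕ) : smap β i = β (Equiv.swap 0 1 i) := by
  simp [smap, Finsupp.domCongr, Finsupp.equivMapDomain_apply]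

lemma wreath_conj_left (g : Wreath (ℕ →₀ L) (ZMod 2)) :
    let σ : Wreath (ℕ →₀ L) (ZMod 2) := SemidirectProduct.inr (Multiplicative.ofAdd (1 : ZMod 2))
    (σ * g * σ⁻¹).left = (wreathAct (ℕ →₀ L) (ZMod 2) (Multiplicative.ofAdd (1 : ZMod 2))) g.left := by
  intro σ
  simp [σ, SemidirectProduct.mul_left, SemidirectProduct.inv_left, SemidirectProduct.mul_right]

lemma wreath_conj_right (g : Wreath (ℕ →₀ L) (ZMod 2)) :
    let σ : Wreath (ℕ →₀ L) (ZMod 2) := SemidirectProduct.inr (Multiplicative.ofAdd (1 : ZMod 2))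
    (σ * g * σ⁻¹).right = g.right := by
  intro σ
  simp [σ, SemidirectProduct.mul_right, SemidirectProduct.inv_right, mul_comm]

lemma act_toAdd (x : Multiplicative (ZMod 2)) (v : Multiplicative (ZMod 2 →₀ (ℕ →₀ L))) (y : ZMod 2) :
    Multiplicative.toAdd ((wreathAct (ℕ →₀ L) (ZMod 2) x) v) y = Multiplicative.toAdd v (y - x.toAdd) := by
  simp [wreathAct, shiftHom, shiftEquiv, Finsupp.domCongr, Finsupp.equivMapDomain_apply, sub_eq_add_neg]

end aux

section aux2
variable {L : Type*} [AddCommGroup L]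

open SemidirectProduct Multiplicative

def HH (M : AddSubgroup L) : Subgroup (Wreath (ℕ →₀ L) (ZMod 2)) where
  carrier := {g | g.right = 1 ∧ evalW (toAdd g.left) ∈ M}
  one_mem' := ⟨rfl, by simpa using M.zero_mem⟩
  mul_mem' := by
    rintro a b ⟨ha1, ha2⟩ ⟨hb1, hb2⟩
    refine ⟨by rw [SemidirectProduct.mul_right, ha1, hb1, mul_one], ?_⟩
    rw [SemidirectProduct.mul_left, ha1, map_one, MulAut.one_apply, toAdd_mul, map_add]
    exact M.add_mem ha2 hb2
  inv_mem' := by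
    rintro a ⟨ha1, ha2⟩
    refine ⟨by rw [SemidirectProduct.inv_right, ha1, inv_one], ?_⟩
    rw [SemidirectProduct.inv_left, ha1, inv_one, map_one, MulAut.one_apply, toAdd_inv, map_neg]
    exact M.neg_mem ha2

lemma mem_HH {M : AddSubgroup L} {g : Wreath (ℕ →₀ L) (ZMod 2)} :
    g ∈ HH M ↔ g.right = 1 ∧ toAdd g.left 0 0 ∈ M := Iff.rfl

noncomputable def Phi (M : AddSubgroup L) (φ : M →+ L) :
    (M.comap (evalW (L := L))) →+ (ZMod 2 →₀ (ℕ →₀ L)) :=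
  AddMonoidHom.mk' (fun w => Finsupp.single 0 (Tmap (w.1 0) + Finsupp.single 0 (φ ⟨w.1 0 0, w.2⟩))
    + Finsupp.single 1 (smap (w.1 1)))
  (by
    rintro ⟨v, hv⟩ ⟨w, hw⟩
    have h : (φ ⟨v 0 0 + w 0 0, add_mem hv hw⟩ : L)
        = φ ⟨v 0 0, hv⟩ + φ ⟨w 0 0, hw⟩ := by
      rw [← map_add]
      rfl
    simp only [AddMemClass.mk_add_mk, Finsupp.add_apply, map_add, h, Finsupp.single_add]
    abel)

lemma Phi_apply (M : AddSubgroup L) (φ : M →+ L) (w) :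
    Phi M φ w = Finsupp.single 0 (Tmap (w.1 0) + Finsupp.single 0 (φ ⟨w.1 0 0, w.2⟩))
      + Finsupp.single 1 (smap (w.1 1)) := rfl

lemma Phi_apply_zero (M : AddSubgroup L) (φ : M →+ L) (w) :
    Phi M φ w 0 = Tmap (w.1 0) + Finsupp.single 0 (φ ⟨w.1 0 0, w.2⟩) := by
  rw [Phi_apply, Finsupp.add_apply, Finsupp.single_apply, Finsupp.single_apply]
  simp [show (1 : ZMod 2) ≠ 0 by decide]

lemma Phi_apply_one (M : AddSubgroup L) (φ : M →+ L) (w) :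
    Phi M φ w 1 = smap (w.1 1) := by
  rw [Phi_apply, Finsupp.add_apply, Finsupp.single_apply, Finsupp.single_apply]
  simp [show (0 : ZMod 2) ≠ 1 by decide]

noncomputable def ff (M : AddSubgroup L) (φ : M →+ L) : HH M →* Wreath (ℕ →₀ L) (ZMod 2) :=
  MonoidHom.mk' (fun g => SemidirectProduct.inl (Multiplicative.ofAdd
    (Phi M φ ⟨toAdd (g : Wreath (ℕ →₀ L) (ZMod 2)).left, (mem_HH.mp g.2).2⟩)))
  (by
    intro a b
    have h : (⟨toAdd ((a * b : HH M) : Wreath (ℕ →₀ L) (ZMod 2)).left,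
          (mem_HH.mp (a * b).2).2⟩ : M.comap (evalW (L := L)))
        = ⟨toAdd (a : Wreath (ℕ →₀ L) (ZMod 2)).left, (mem_HH.mp a.2).2⟩
          + ⟨toAdd (b : Wreath (ℕ →₀ L) (ZMod 2)).left, (mem_HH.mp b.2).2⟩ := by
      apply Subtype.ext
      show toAdd ((a * b : HH M) : Wreath (ℕ →₀ L) (ZMod 2)).left
        = toAdd (a : Wreath (ℕ →₀ L) (ZMod 2)).left + toAdd (b : Wreath (ℕ →₀ L) (ZMod 2)).left
      rw [Subgroup.coe_mul, SemidirectProduct.mul_left, (mem_HH.mp a.2).1, map_one,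
        MulAut.one_apply, toAdd_mul]
    beta_reduce
    rw [h, map_add, ofAdd_add, map_mul])

lemma ff_right (M : AddSubgroup L) (φ : M →+ L) (g : HH M) :
    (ff M φ g).right = 1 := rfl

lemma ff_left (M : AddSubgroup L) (φ : M →+ L) (g : HH M) :
    toAdd (ff M φ g).left
      = Phi M φ ⟨toAdd (g : Wreath (ℕ →₀ L) (ZMod 2)).left, (mem_HH.mp g.2).2⟩ := rfl

end aux2

section aux3
variable {L : Type*} [AddCommGroup L]
open SemidirectProduct Multiplicative

lemma HH_le_ker (M : AddSubgroup L) :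
    HH M ≤ (rightHom : Wreath (ℕ →₀ L) (ZMod 2) →* Multiplicative (ZMod 2)).ker := by
  intro g hg
  exact (mem_HH.mp hg).1

lemma HH_comap_inl (M : AddSubgroup L) :
    (HH M).comap (inl : Multiplicative (ZMod 2 →₀ ℕ →₀ L) →* Wreath (ℕ →₀ L) (ZMod 2))
      = Subgroup.comap (AddMonoidHom.toMultiplicative (evalW (L := L)))
          (AddSubgroup.toSubgroup M) := by
  ext x
  simp only [Subgroup.mem_comap, mem_HH, right_inl, left_inl, true_and]
  rfl

lemma eval_surj : Function.Surjective
    (AddMonoidHom.toMultiplicative (evalW (L := L))) := by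
  intro a
  refine ⟨Multiplicative.ofAdd (Finsupp.single 0 (Finsupp.single 0 (Multiplicative.toAdd a))), ?_⟩
  show Multiplicative.ofAdd (evalW _) = a
  simp

lemma HH_finiteIndex (M : AddSubgroup L) (hM : M.FiniteIndex) : (HH M).FiniteIndex := by
  constructor
  rw [← Subgroup.relIndex_mul_index (HH_le_ker M)]
  apply mul_ne_zero
  · have h1 : ((HH M).comap (inl : Multiplicative (ZMod 2 →₀ ℕ →₀ L) →* Wreath (ℕ →₀ L) (ZMod 2))).index
        = (HH M).relIndex (inl : Multiplicative (ZMod 2 →₀ ℕ →₀ L) →* Wreath (ℕ →₀ L) (ZMod 2)).range :=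
      Subgroup.index_comap _ _
    rw [range_inl_eq_ker_rightHom] at h1
    rw [← h1, HH_comap_inl, Subgroup.index_comap_of_surjective _ eval_surj,
      AddSubgroup.index_toSubgroup]
    exact hM.index_ne_zero
  · rw [Subgroup.index_ker, MonoidHom.range_eq_top_of_surjective _ rightHom_surjective]
    simp only [Subgroup.card_top]
    exact Nat.card_pos.ne'

end aux3

section aux4
variable {L : Type*} [AddCommGroup L]
open SemidirectProduct Multiplicative

lemma smap_at0 (β : ℕ →₀ L) : smap β 0 = β 1 := by
  rw [smap_apply, Equiv.swap_apply_left]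

lemma smap_at1 (β : ℕ →₀ L) : smap β 1 = β 0 := by
  rw [smap_apply, Equiv.swap_apply_right]

lemma smap_hi (β : ℕ →₀ L) {i : ℕ} (hi : 2 ≤ i) : smap β i = β i := by
  rw [smap_apply, Equiv.swap_apply_of_ne_of_ne (by omega) (by omega)]

lemma ff_left' (M : AddSubgroup L) (φ : M →+ L) (g : Wreath (ℕ →₀ L) (ZMod 2)) (hg : g ∈ HH M) :
    toAdd (ff M φ ⟨g, hg⟩).left = Phi M φ ⟨toAdd g.left, (mem_HH.mp hg).2⟩ := rfl

lemma Phi_apply_zero' (M : AddSubgroup L) (φ : M →+ L) (v : ZMod 2 →₀ ℕ →₀ L)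
    (hv : v ∈ AddSubgroup.comap (evalW (L := L)) M) :
    Phi M φ ⟨v, hv⟩ 0 = Tmap (v 0) + Finsupp.single 0 (φ ⟨v 0 0, hv⟩) :=
  Phi_apply_zero M φ ⟨v, hv⟩

lemma Phi_apply_one' (M : AddSubgroup L) (φ : M →+ L) (v : ZMod 2 →₀ ℕ →₀ L)
    (hv : v ∈ AddSubgroup.comap (evalW (L := L)) M) :
    Phi M φ ⟨v, hv⟩ 1 = smap (v 1) :=
  Phi_apply_one M φ ⟨v, hv⟩

def Usub (K : Subgroup (Wreath (ℕ →₀ L) (ZMod 2)))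
    (hr : ∀ g ∈ K, SemidirectProduct.right g = 1) : AddSubgroup L where
  carrier := {a | ∃ β : ℕ →₀ L, (∃ g ∈ K, toAdd (SemidirectProduct.left g) 0 = β)
    ∧ β 0 = a ∧ ∀ i, 2 ≤ i → β i = 0}
  zero_mem' := ⟨0, ⟨1, K.one_mem, by simp⟩, by simp, by simp⟩
  add_mem' := by
    rintro a b ⟨β, ⟨g, hg, hgβ⟩, hβ0, hβs⟩ ⟨γ, ⟨g', hg', hgγ⟩, hγ0, hγs⟩
    refine ⟨β + γ, ⟨g * g', K.mul_mem hg hg', ?_⟩, by simp [hβ0, hγ0],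
      fun i hi => by simp [hβs i hi, hγs i hi]⟩
    rw [SemidirectProduct.mul_left, hr g hg, map_one, MulAut.one_apply, toAdd_mul,
      Finsupp.add_apply, hgβ, hgγ]
  neg_mem' := by
    rintro a ⟨β, ⟨g, hg, hgβ⟩, hβ0, hβs⟩
    refine ⟨-β, ⟨g⁻¹, K.inv_mem hg, ?_⟩, by simp [hβ0], fun i hi => by simp [hβs i hi]⟩
    rw [SemidirectProduct.inv_left, hr g hg, inv_one, map_one, MulAut.one_apply, toAdd_inv,
      Finsupp.neg_apply, hgβ]

lemma mem_Usub {K : Subgroup (Wreath (ℕ →₀ L) (ZMod 2))}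
    {hr : ∀ g ∈ K, SemidirectProduct.right g = 1} {a : L} :
    a ∈ Usub K hr ↔ ∃ β : ℕ →₀ L, (∃ g ∈ K, toAdd (SemidirectProduct.left g) 0 = β)
      ∧ β 0 = a ∧ ∀ i, 2 ≤ i → β i = 0 := Iff.rfl

end aux4

open SemidirectProduct Multiplicative

/-- Theorem 2: If `L` is a self-similar abelian group, then the wreath
product `L^ω wr C₂` is self-similar. -/
theorem stmt19 {L : Type*} [AddCommGroup L]
    (hss : ∃ M : AddSubgroup L, M.FiniteIndex ∧ ∃ φ : M →+ L,
      ∀ U : AddSubgroup L, ∀ hU : U ≤ M,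
        (∀ u (hu : u ∈ U), φ ⟨u, hU hu⟩ ∈ U) → U = ⊥) :
    ∃ H : Subgroup (Wreath (ℕ →₀ L) (ZMod 2)), H.FiniteIndex ∧
      ∃ f : H →* Wreath (ℕ →₀ L) (ZMod 2),
        ∀ K : Subgroup (Wreath (ℕ →₀ L) (ZMod 2)), K.Normal → ∀ hK : K ≤ H,
          (∀ k (hk : k ∈ K), f ⟨k, hK hk⟩ ∈ K) → K = ⊥ := by
  classical
  obtain ⟨M, hM, φ, hφinv⟩ := hss
  refine ⟨HH M, HH_finiteIndex M hM, ff M φ, ?_⟩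
  intro K hN hK hf
  have hr : ∀ g ∈ K, SemidirectProduct.right g = 1 := fun g hg => (mem_HH.mp (hK hg)).1
  have hm : ∀ g ∈ K, toAdd (SemidirectProduct.left g) 0 0 ∈ M :=
    fun g hg => (mem_HH.mp (hK hg)).2
  set σ : Wreath (ℕ →₀ L) (ZMod 2) := SemidirectProduct.inr (ofAdd (1 : ZMod 2)) with hσ
  have hconj : ∀ (g : Wreath (ℕ →₀ L) (ZMod 2)) (y : ZMod 2),
      toAdd (σ * g * σ⁻¹).left y = toAdd g.left (y - 1) := by
    intro g y
    rw [hσ, wreath_conj_left, act_toAdd, toAdd_ofAdd]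
  have h01 : (0 : ZMod 2) - 1 = 1 := by decide
  have h10 : (1 : ZMod 2) - 1 = 0 := by decide
  -- swap invariance of the coordinate-0 sections
  have hs : ∀ β : ℕ →₀ L, (∃ g ∈ K, toAdd g.left 0 = β) →
      (∃ g ∈ K, toAdd g.left 0 = smap β) := by
    rintro β ⟨g, hg, hgβ⟩
    have hg' : σ * g * σ⁻¹ ∈ K := hN.conj_mem g hg σ
    have hg'' : ff M φ ⟨σ * g * σ⁻¹, hK hg'⟩ ∈ K := hf _ hg'
    refine ⟨σ * (ff M φ ⟨σ * g * σ⁻¹, hK hg'⟩) * σ⁻¹, hN.conj_mem _ hg'' σ, ?_⟩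
    rw [hconj _ 0, h01, ff_left', Phi_apply_one]
    rw [hconj g 1, h10, hgβ]
  -- contraction invariance
  have ht : ∀ (β : ℕ →₀ L) (hmem : β 0 ∈ M), (∃ g ∈ K, toAdd g.left 0 = β) →
      (∃ g ∈ K, toAdd g.left 0 = Tmap β + Finsupp.single 0 (φ ⟨β 0, hmem⟩)) := by
    rintro β hmem ⟨g, hg, hgβ⟩
    subst hgβ
    refine ⟨ff M φ ⟨g, hK hg⟩, hf g hg, ?_⟩
    rw [ff_left', Phi_apply_zero]
  -- the φ-invariant subgroup U
  have hUle : Usub K hr ≤ M := by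
    rintro a ⟨β, ⟨g, hg, hgβ⟩, hβ0, hβs⟩
    rw [← hβ0, ← hgβ]
    exact hm g hg
  have hUinv : ∀ u (hu : u ∈ Usub K hr), φ ⟨u, hUle hu⟩ ∈ Usub K hr := by
    rintro a ⟨β, hPV, hβ0, hβs⟩
    have hβM : β 0 ∈ M := by
      obtain ⟨g, hg, hgβ⟩ := hPV
      rw [← hgβ]; exact hm g hg
    have h1 : β 1 + φ ⟨β 0, hβM⟩ ∈ Usub K hr := by
      refine ⟨Tmap β + Finsupp.single 0 (φ ⟨β 0, hβM⟩), ht β hβM hPV, ?_, ?_⟩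
      · rw [Finsupp.add_apply, Tmap_apply, Finsupp.single_eq_same]
      · intro i hi
        rw [Finsupp.add_apply, Tmap_apply, Finsupp.single_eq_of_ne' (by omega : (0:ℕ) ≠ i),
          hβs (i + 1) (by omega), add_zero]
    have h2 : β 1 ∈ Usub K hr :=
      ⟨smap β, hs β hPV, smap_at0 β, fun i hi => by rw [smap_hi β hi]; exact hβs i hi⟩
    have h3 := (Usub K hr).sub_mem h1 h2
    rw [add_sub_cancel_left] at h3
    have he : (⟨a, hUle ⟨β, hPV, hβ0, hβs⟩⟩ : M) = ⟨β 0, hβM⟩ := Subtype.ext hβ0.symm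
    rwa [he]
  have hUbot := hφinv (Usub K hr) hUle hUinv
  have hbot : ∀ a ∈ Usub K hr, a = 0 := by
    rw [hUbot]; intro a ha; exact ha
  -- support in {0,1} forces zero
  have P2 : ∀ β : ℕ →₀ L, (∃ g ∈ K, toAdd g.left 0 = β) → (∀ i, 2 ≤ i → β i = 0) →
      β = 0 := by
    intro β hPV hβs
    have h0 : β 0 = 0 := hbot _ ⟨β, hPV, rfl, hβs⟩
    have h1 : β 1 = 0 := hbot _
      ⟨smap β, hs β hPV, smap_at0 β, fun i hi => by rw [smap_hi β hi]; exact hβs i hi⟩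
    ext i
    rcases i with _ | _ | n
    · simpa using h0
    · simpa using h1
    · simpa using hβs (n + 2) (by omega)
  -- bounded support forces zero
  have Qn : ∀ n, ∀ β : ℕ →₀ L, (∃ g ∈ K, toAdd g.left 0 = β) →
      (∀ i, n + 2 ≤ i → β i = 0) → β = 0 := by
    intro n
    induction n with
    | zero => exact fun β h h' => P2 β h h'
    | succ n ih =>
      intro β hPV hβs
      have hβM : β 0 ∈ M := by
        obtain ⟨g, hg, hgβ⟩ := hPV
        rw [← hgβ]; exact hm g hg
      have htz : Tmap β + Finsupp.single 0 (φ ⟨β 0, hβM⟩) = 0 := by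
        apply ih _ (ht β hβM hPV)
        intro i hi
        rw [Finsupp.add_apply, Tmap_apply, Finsupp.single_eq_of_ne' (by omega : (0:ℕ) ≠ i),
          hβs (i + 1) (by omega), add_zero]
      apply P2 β hPV
      intro i hi
      have h4 := congrArg (fun v : ℕ →₀ L => v (i - 1)) htz
      simp only [Finsupp.add_apply, Tmap_apply, Finsupp.coe_zero, Pi.zero_apply] at h4
      rw [Finsupp.single_eq_of_ne' (by omega : (0:ℕ) ≠ i - 1), add_zero] at h4
      rwa [show i - 1 + 1 = i by omega] at h4
  -- all coordinate-0 sections vanish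
  have hV0 : ∀ β : ℕ →₀ L, (∃ g ∈ K, toAdd g.left 0 = β) → β = 0 := by
    intro β hPV
    apply Qn (β.support.sup id) β hPV
    intro i hi
    by_contra hne
    have h5 : i ∈ β.support := Finsupp.mem_support_iff.mpr hne
    have h6 : i ≤ β.support.sup id := Finset.le_sup (f := id) h5
    omega
  -- conclude
  rw [Subgroup.eq_bot_iff_forall]
  intro g hg
  have h0 : toAdd g.left 0 = 0 := hV0 _ ⟨g, hg, rfl⟩
  have h1 : toAdd g.left 1 = 0 := by
    have h7 : toAdd (σ * g * σ⁻¹).left 0 = 0 := hV0 _ ⟨σ * g * σ⁻¹, hN.conj_mem g hg σ, rfl⟩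
    rwa [hconj g 0, h01] at h7
  have hL : toAdd g.left = 0 := by
    apply Finsupp.ext
    intro y
    have hy : y = 0 ∨ y = 1 := by revert y; decide
    rcases hy with hy | hy <;> subst hy <;> simp [h0, h1]
  have hleft : g.left = 1 := by
    rw [← ofAdd_toAdd g.left, hL, ofAdd_zero]
  have hrg : SemidirectProduct.right g = 1 := hr g hg
  cases g
  simp only at hleft hrg
  rw [hleft, hrg]
  rfl
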